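/- arXiv:2603.13712 — 2 statements merged into one kernel-verified Lean document; each statement's English description precedes it below -/
import Mathlib

section
/- Let A and W be n×n Hermitian matrices with operator norm ‖W‖∞ ≤ 1 and Tr(W A) = ‖A‖₁. Then every eigenvector v of A with nonzero eigenvalue a satisfies W v = sign(a) v, where sign(a) = 1 if a > 0 and sign(a) = −1 if a < 0. -/
open scoped ComplexOrder

lemma aux_inner_one {E : Type*} [NormedAddCommGroup E] [InnerProductSpace ℂ E]
    (x y : E) (hx : ‖x‖ = 1) (hy : ‖y‖ ≤ 1)
    (h : Complex.re (inner ℂ x y : ℂ) = 1) : y = x := by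
  have hre : Complex.re (inner ℂ y x : ℂ) = 1 := by
    rw [← inner_conj_symm x y, Complex.conj_re] at h; exact h
  have hns : ‖y - x‖ ^ 2 = ‖y‖ ^ 2 - 2 * Complex.re (inner ℂ y x : ℂ) + ‖x‖ ^ 2 :=
    by simpa using norm_sub_sq (𝕜 := ℂ) y x
  have h0 : ‖y - x‖ = 0 := by nlinarith [norm_nonneg (y - x), norm_nonneg y]
  have := norm_eq_zero.mp h0
  exact sub_eq_zero.mp this


/-- The trace norm (Schatten 1-norm) of a complex matrix: `‖A‖₁ = Tr √(Aᴴ A)`. -/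
noncomputable def traceNorm {m : Type*} [Fintype m] [DecidableEq m]
    (A : Matrix m m ℂ) : ℝ :=
  (((Matrix.posSemidef_conjTranspose_mul_self A).1.eigenvectorUnitary.1 *
      Matrix.diagonal (((↑) : ℝ → ℂ) ∘ (√·) ∘ (Matrix.posSemidef_conjTranspose_mul_self A).1.eigenvalues) *
      (star (Matrix.posSemidef_conjTranspose_mul_self A).1.eigenvectorUnitary :
        Matrix m m ℂ)).trace).re

open Matrix

/-- if `A` and `W` are Hermitian, `W` has operator norm at most `1`
(i.e. `‖W u‖ ≤ ‖u‖` for all `u`), and `Tr(W A) = ‖A‖₁`, then every eigenvector `v` of `A`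
with nonzero eigenvalue `a` satisfies `W v = sign(a) v`, where `sign(a) = 1` if `a > 0`
and `sign(a) = −1` if `a < 0`. -/
theorem maximizer_fixes_eigenvectors
    {n : ℕ} (A W : Matrix (Fin n) (Fin n) ℂ)
    (hA : A.IsHermitian) (hW : W.IsHermitian)
    (hWnorm : ∀ u : EuclideanSpace ℂ (Fin n), ‖Matrix.toEuclideanLin W u‖ ≤ ‖u‖)
    (hWA : (W * A).trace = (traceNorm A : ℂ))
    (v : Fin n → ℂ) (hv : v ≠ 0) (a : ℝ) (ha : a ≠ 0)
    (heig : A.mulVec v = (a : ℂ) • v) :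
    W.mulVec v = (if 0 < a then (1 : ℂ) else (-1 : ℂ)) • v := by
  classical
  set U : Matrix (Fin n) (Fin n) ℂ := (hA.eigenvectorUnitary : Matrix (Fin n) (Fin n) ℂ) with hU
  set lam : Fin n → ℝ := hA.eigenvalues with hlam
  set b := hA.eigenvectorBasis with hb
  have hUU : star U * U = 1 := (Matrix.mem_unitaryGroup_iff'.mp hA.eigenvectorUnitary.2)
  have hUU' : U * star U = 1 := (Matrix.mem_unitaryGroup_iff.mp hA.eigenvectorUnitary.2)
  have hprod : ∀ d₁ d₂ : Fin n → ℂ, (U * Matrix.diagonal d₁ * star U) *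
      (U * Matrix.diagonal d₂ * star U) = U * Matrix.diagonal (fun i => d₁ i * d₂ i) * star U := by
    intro d₁ d₂
    have h1 : star U * (U * Matrix.diagonal d₂ * star U) = Matrix.diagonal d₂ * star U := by
      rw [← Matrix.mul_assoc, ← Matrix.mul_assoc, hUU, Matrix.one_mul]
    rw [Matrix.mul_assoc (U * Matrix.diagonal d₁), h1, ← Matrix.mul_assoc,
      Matrix.mul_assoc U, Matrix.diagonal_mul_diagonal]
  have hspec : A = U * Matrix.diagonal (fun i => (lam i : ℂ)) * star U := by
    convert hA.spectral_theorem using 2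
    rfl
  -- trace norm = sum of |eigenvalues|
  have htn : traceNorm A = ∑ i, |lam i| := by
    have hD : (Matrix.diagonal fun i => ((|lam i| : ℝ) : ℂ)).PosSemidef := by
      rw [Matrix.posSemidef_diagonal_iff]
      intro i
      exact_mod_cast Complex.zero_le_real.mpr (abs_nonneg (lam i))
    have hS : (U * Matrix.diagonal (fun i => ((|lam i| : ℝ) : ℂ)) * star U).PosSemidef := by
      simpa [Matrix.star_eq_conjTranspose] using hD.mul_mul_conjTranspose_same U
    have hsq : Aᴴ * A = (U * Matrix.diagonal (fun i => ((|lam i| : ℝ) : ℂ)) * star U) ^ 2 := by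
      rw [hA.eq, sq, hprod]
      conv_lhs => rw [hspec, hprod]
      simp only [← Complex.ofReal_mul, abs_mul_abs_self]
    have hsqrt : cfc Real.sqrt (Aᴴ * A) =
        U * Matrix.diagonal (fun i => ((|lam i| : ℝ) : ℂ)) * star U := by
      have e0 : U * Matrix.diagonal (fun i => ((|lam i| : ℝ) : ℂ)) * star U = cfc (fun x : ℝ => |x|) A := by
        rw [hA.cfc_eq]; rfl
      have e1 : Aᴴ * A = cfc (fun x : ℝ => |x| ^ 2) A := by
        rw [hsq, e0, cfc_pow (fun x : ℝ => |x|) 2 A]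
      rw [e1, ← cfc_comp Real.sqrt (fun x : ℝ => |x| ^ 2) A (hg := Real.continuous_sqrt.continuousOn)
        (hf := (continuous_abs.pow 2).continuousOn), e0]
      congr 1
      funext x
      simp [Real.sqrt_sq_eq_abs]
    rw [show traceNorm A = (cfc Real.sqrt (Aᴴ * A)).trace.re from by
        rw [(posSemidef_conjTranspose_mul_self A).1.cfc_eq]; rfl, hsqrt, Matrix.trace_mul_cycle, hUU, Matrix.one_mul,
      Matrix.trace_diagonal]
    rw [Complex.re_sum]
    simp
  -- B i i = inner (b i) (W (b i))
  set B : Matrix (Fin n) (Fin n) ℂ := star U * W * U with hB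
  have hBdiag : ∀ i, B i i = star (b i : Fin n → ℂ) ⬝ᵥ (W *ᵥ (b i : Fin n → ℂ)) := by
    intro i
    rw [hB]
    simp only [Matrix.mul_apply, Matrix.star_apply, dotProduct, Matrix.mulVec,
      Matrix.IsHermitian.eigenvectorUnitary_apply, Finset.sum_mul, Finset.mul_sum,
      Pi.star_apply]
    rw [Finset.sum_comm]
    refine Finset.sum_congr rfl fun k _ => Finset.sum_congr rfl fun j _ => ?_
    rw [hU, Matrix.IsHermitian.eigenvectorUnitary_apply, Matrix.IsHermitian.eigenvectorUnitary_apply]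
    ring
  have hBinner : ∀ i, B i i = (inner ℂ (b i) (Matrix.toEuclideanLin W (b i)) : ℂ) := by
    intro i
    rw [hBdiag i, EuclideanSpace.inner_eq_star_dotProduct, dotProduct_comm]
    rfl
  have hBle : ∀ i, |(B i i).re| ≤ 1 := by
    intro i
    have h1 : ‖(b i : EuclideanSpace ℂ (Fin n))‖ = 1 := b.orthonormal.1 i
    have h2 : ‖(inner ℂ (b i) (Matrix.toEuclideanLin W (b i)) : ℂ)‖ ≤ 1 := by
      calc ‖(inner ℂ (b i) (Matrix.toEuclideanLin W (b i)) : ℂ)‖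
          ≤ ‖(b i : EuclideanSpace ℂ (Fin n))‖ * ‖Matrix.toEuclideanLin W (b i)‖ :=
            norm_inner_le_norm _ _
        _ ≤ 1 := by
            rw [h1, one_mul]
            exact (hWnorm (b i)).trans (le_of_eq h1)
    rw [hBinner i]
    calc |(inner ℂ (b i) (Matrix.toEuclideanLin W (b i)) : ℂ).re|
        ≤ ‖(inner ℂ (b i) (Matrix.toEuclideanLin W (b i)) : ℂ)‖ := Complex.abs_re_le_norm _
      _ ≤ 1 := h2
  -- trace(W*A) = ∑ lam i * B i i
  have htr : (W * A).trace = ∑ i, (lam i : ℂ) * B i i := by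
    have hWAeq : W * A = (W * U) * Matrix.diagonal (fun i => (lam i : ℂ)) * star U := by
      rw [hspec, ← Matrix.mul_assoc, ← Matrix.mul_assoc]
    rw [hWAeq, Matrix.trace_mul_cycle, ← Matrix.mul_assoc]
    rw [Matrix.trace]
    simp only [Matrix.diag_apply, Matrix.mul_diagonal]
    exact Finset.sum_congr rfl fun i _ => mul_comm _ _
  -- equality in the sum
  have hre : ∑ i, lam i * (B i i).re = ∑ i, |lam i| := by
    have h1 : (∑ i, (lam i : ℂ) * B i i).re = ((traceNorm A : ℂ)).re := by
      rw [← htr, hWA]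
    rw [Complex.re_sum] at h1
    simp only [Complex.re_ofReal_mul, Complex.ofReal_re] at h1
    rw [h1, htn]
  have hkey : ∀ i, lam i * (B i i).re = |lam i| := by
    have h0 : ∑ i : Fin n, (|lam i| - lam i * (B i i).re) = 0 := by
      rw [Finset.sum_sub_distrib, hre, sub_self]
    have hterm : ∀ i ∈ Finset.univ, (0:ℝ) ≤ |lam i| - lam i * (B i i).re := by
      intro i _
      have h2 := hBle i
      have h3 := abs_nonneg ((B i i).re)
      nlinarith [le_abs_self (lam i * (B i i).re), abs_mul (lam i) ((B i i).re),
        abs_nonneg (lam i), le_abs_self (lam i), neg_abs_le (lam i)]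
    intro i
    have := (Finset.sum_eq_zero_iff_of_nonneg hterm).mp h0 i (Finset.mem_univ i)
    linarith
  -- W fixes eigenvectors of nonzero eigenvalue
  have hfix : ∀ i, lam i ≠ 0 → W *ᵥ (b i : Fin n → ℂ) =
      (if 0 < lam i then (1:ℂ) else (-1:ℂ)) • (b i : Fin n → ℂ) := by
    intro i hi
    have hnormb : ‖(b i : EuclideanSpace ℂ (Fin n))‖ = 1 := b.orthonormal.1 i
    have hwle : ‖Matrix.toEuclideanLin W (b i)‖ ≤ 1 := (hWnorm _).trans (le_of_eq hnormb)
    rcases hi.lt_or_gt with hneg | hpos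
    · -- negative eigenvalue: re inner = -1
      have h1 : (inner ℂ (b i) (Matrix.toEuclideanLin W (b i)) : ℂ).re = -1 := by
        have hk := hkey i
        rw [← hBinner i]
        rw [abs_of_neg hneg] at hk
        have := mul_left_cancel₀ (ne_of_lt hneg) (by linarith [hk] : lam i * (B i i).re = lam i * (-1))
        exact this
      have h2 : (inner ℂ (b i) (-(Matrix.toEuclideanLin W (b i))) : ℂ).re = 1 := by
        rw [inner_neg_right, Complex.neg_re, h1]
        norm_num
      have h3 := aux_inner_one (b i) (-(Matrix.toEuclideanLin W (b i))) hnormb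
        (by rwa [norm_neg]) h2
      have h4 : Matrix.toEuclideanLin W (b i) = -(b i) := neg_eq_iff_eq_neg.mp h3
      have h5 := congrArg WithLp.ofLp h4
      simp only [Matrix.ofLp_toEuclideanLin_apply, WithLp.ofLp_neg] at h5
      rw [if_neg (not_lt.mpr (le_of_lt hneg))]
      rw [neg_one_smul]
      exact h5
    · -- positive eigenvalue
      have h1 : (inner ℂ (b i) (Matrix.toEuclideanLin W (b i)) : ℂ).re = 1 := by
        have hk := hkey i
        rw [← hBinner i]
        rw [abs_of_pos hpos] at hk
        exact mul_left_cancel₀ (ne_of_gt hpos) (by linarith [hk] : lam i * (B i i).re = lam i * 1)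
      have h3 := aux_inner_one (b i) (Matrix.toEuclideanLin W (b i)) hnormb hwle h1
      have h5 := congrArg WithLp.ofLp h3
      simp only [Matrix.ofLp_toEuclideanLin_apply, WithLp.ofLp_neg] at h5
      rw [if_pos hpos, one_smul]
      exact h5
  -- decompose v
  set c : Fin n → ℂ := fun i => star (b i : Fin n → ℂ) ⬝ᵥ v with hc
  have hvsum : v = ∑ i, c i • (b i : Fin n → ℂ) := by
    have h1 : v = U *ᵥ (star U *ᵥ v) := by
      rw [Matrix.mulVec_mulVec, hUU', Matrix.one_mulVec]
    funext j
    rw [Finset.sum_apply]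
    conv_lhs => rw [h1]
    rw [Matrix.mulVec, dotProduct]
    refine Finset.sum_congr rfl fun i _ => ?_
    rw [Pi.smul_apply, smul_eq_mul, hc]
    simp only [Matrix.mulVec, dotProduct, Matrix.star_apply, Pi.star_apply,
      hU, Matrix.IsHermitian.eigenvectorUnitary_apply,
      Finset.sum_mul, Finset.mul_sum]
    refine Finset.sum_congr rfl fun k _ => ?_
    ring
  -- coefficients vanish off the a-eigenspace
  have hc0 : ∀ i, lam i ≠ a → c i = 0 := by
    intro i hia
    have heigb : A *ᵥ (b i : Fin n → ℂ) = (lam i : ℂ) • (b i : Fin n → ℂ) := by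
      have h7 := hA.mulVec_eigenvectorBasis i
      rw [RCLike.real_smul_eq_coe_smul (K := ℂ)] at h7
      exact h7
    have e1 : star (b i : Fin n → ℂ) ⬝ᵥ (A *ᵥ v) = (a : ℂ) * c i := by
      rw [heig, dotProduct_smul, smul_eq_mul]
    have e2 : star (b i : Fin n → ℂ) ⬝ᵥ (A *ᵥ v) = (lam i : ℂ) * c i := by
      rw [Matrix.dotProduct_mulVec]
      have h6 : star (b i : Fin n → ℂ) ᵥ* A = star (A *ᵥ (b i : Fin n → ℂ)) := by
        rw [Matrix.star_mulVec, hA.eq]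
      rw [h6, heigb, star_smul, smul_dotProduct]
      simp only [RCLike.star_def, Complex.conj_ofReal, smul_eq_mul]
      rfl
    have : ((lam i : ℂ) - (a : ℂ)) * c i = 0 := by
      rw [sub_mul, ← e1, ← e2, sub_self]
    rcases mul_eq_zero.mp this with h | h
    · exact absurd (Complex.ofReal_injective (by rwa [sub_eq_zero] at h)) hia
    · exact h
  -- put everything together
  have hWv : W *ᵥ v = ∑ i, c i • (W *ᵥ (b i : Fin n → ℂ)) := by
    conv_lhs => rw [hvsum]
    simp only [← Matrix.mulVecLin_apply, map_sum, _root_.map_smul]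
  have hterm : ∀ i, c i • (W *ᵥ (b i : Fin n → ℂ)) =
      (if 0 < a then (1:ℂ) else (-1:ℂ)) • (c i • (b i : Fin n → ℂ)) := by
    intro i
    by_cases hcz : c i = 0
    · simp [hcz]
    · have hlam_eq : lam i = a := by
        by_contra h
        exact hcz (hc0 i h)
      have hne : lam i ≠ 0 := by rw [hlam_eq]; exact ha
      rw [hfix i hne, hlam_eq, smul_comm]
  rw [hWv]
  calc ∑ i, c i • (W *ᵥ (b i : Fin n → ℂ))
      = ∑ i, (if 0 < a then (1:ℂ) else (-1:ℂ)) • (c i • (b i : Fin n → ℂ)) :=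
        Finset.sum_congr rfl fun i _ => hterm i
    _ = (if 0 < a then (1:ℂ) else (-1:ℂ)) • ∑ i, c i • (b i : Fin n → ℂ) := by
        rw [Finset.smul_sum]
    _ = (if 0 < a then (1:ℂ) else (-1:ℂ)) • v := by rw [← hvsum]
end

section
/- Let Δ ∈ M_m(ℂ) be Hermitian with Jordan decomposition Δ = Δ₊ − Δ₋, and let λ : M_m(ℂ) → M_d(ℂ) be a completely positive trace-preserving (CPTP) map. Write the Jordan decomposition λ(Δ) = Q₊ − Q₋ and let Π₊, Π₋ be the orthogonal projectors onto the supports of Q₊ and Q₋ respectively. Then ‖λ(Δ)‖₁ = ‖Δ‖₁ if and only if Π₊ λ(Δ₊) Π₊ = λ(Δ₊), Π₋ λ(Δ₋) Π₋ = λ(Δ₋), Π₊ λ(Δ₋) Π₊ = 0, and Π₋ λ(Δ₊) Π₋ = 0. -/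
open scoped ComplexOrder

/-- The tensor product `Φ ⊗ id_{M_k(ℂ)}` of a map between matrix algebras with the
identity on `M_k(ℂ)`, acting blockwise. -/
def mapTensorId {m d : Type*} [Fintype m] [Fintype d] (k : ℕ)
    (Φ : Matrix m m ℂ → Matrix d d ℂ)
    (M : Matrix (m × Fin k) (m × Fin k) ℂ) : Matrix (d × Fin k) (d × Fin k) ℂ :=
  Matrix.of fun p q => Φ (Matrix.of fun i j => M (i, p.2) (j, q.2)) p.1 q.1

/-- A map between matrix algebras is completely positive if `Φ ⊗ id_{M_k(ℂ)}` is
positive for every `k`. -/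
def IsCompletelyPositive {m d : Type*} [Fintype m] [Fintype d]
    (Φ : Matrix m m ℂ → Matrix d d ℂ) : Prop :=
  ∀ (k : ℕ) (M : Matrix (m × Fin k) (m × Fin k) ℂ),
    M.PosSemidef → (mapTensorId k Φ M).PosSemidef

/-- A map between matrix algebras is trace-preserving if `Tr (Φ X) = Tr X` for all `X`. -/
def IsTracePreservingMap {m d : Type*} [Fintype m] [Fintype d]
    (Φ : Matrix m m ℂ → Matrix d d ℂ) : Prop :=
  ∀ X : Matrix m m ℂ, (Φ X).trace = X.trace

/-- `P` is the orthogonal projector onto the support (range) of the Hermitian matrix `Q`: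
it is a Hermitian idempotent that acts as the identity on the range of `Q` and vanishes
on its kernel. -/
def IsSupportProjection {d : Type*} [Fintype d]
    (P Q : Matrix d d ℂ) : Prop :=
  P.IsHermitian ∧ P * P = P ∧ P * Q = Q ∧
    ∀ v : d → ℂ, Q.mulVec v = 0 → P.mulVec v = 0


open Matrix in
private lemma psd_diag_nonneg' {n : Type*} [Fintype n] [DecidableEq n]
    {A : Matrix n n ℂ} (hA : A.PosSemidef) (i : n) : 0 ≤ A i i := by
  exact hA.diag_nonneg

open Matrix in
private lemma psd_trace_nonneg' {n : Type*} [Fintype n] [DecidableEq n]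
    {A : Matrix n n ℂ} (hA : A.PosSemidef) : 0 ≤ A.trace :=
  Finset.sum_nonneg fun i _ => psd_diag_nonneg' hA i

open Matrix MatrixOrder in
private lemma psd_trace_eq_zero_iff' {n : Type*} [Fintype n] [DecidableEq n]
    {A : Matrix n n ℂ} (hA : A.PosSemidef) :
    A.trace = 0 ↔ A = 0 := by
  constructor
  · intro h
    obtain ⟨B, rfl⟩ := CStarAlgebra.nonneg_iff_eq_star_mul_self.mp hA.nonneg
    have hdiag : ∀ i ∈ Finset.univ, (Bᴴ * B) i i = 0 :=
      (Finset.sum_eq_zero_iff_of_nonneg fun i _ => psd_diag_nonneg' hA i).mp h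
    have hB : B = 0 := by
      ext i j
      have h0 := hdiag j (Finset.mem_univ j)
      have hdp : star (fun k => B k j) ⬝ᵥ (fun k => B k j) = 0 := by
        simpa [Matrix.mul_apply, dotProduct, Matrix.conjTranspose_apply] using h0
      exact congrFun (dotProduct_star_self_eq_zero.mp hdp) i
    simp [hB]
  · intro h; simp [h]

open Matrix in
private lemma cp_pos' {m d : Type*} [Fintype m] [Fintype d] [DecidableEq m] [DecidableEq d]
    {lam : Matrix m m ℂ → Matrix d d ℂ}
    (hcp : IsCompletelyPositive lam) {A : Matrix m m ℂ} (hA : A.PosSemidef) :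
    (lam A).PosSemidef := by
  have hM := hcp 1 (A.submatrix Prod.fst Prod.fst) (hA.submatrix _)
  have heq : lam A =
      (mapTensorId 1 lam (A.submatrix Prod.fst Prod.fst)).submatrix
        (fun i => (i, (0 : Fin 1))) (fun i => (i, (0 : Fin 1))) := by
    ext i j
    show lam A i j = lam (Matrix.of fun a b => A a b) i j
    rfl
  rw [heq]
  exact hM.submatrix _

open Matrix in
private lemma supp_kill' {n : Type*} [Fintype n] {P Q N : Matrix n n ℂ}
    (h : ∀ v, Q.mulVec v = 0 → P.mulVec v = 0) (hQN : Q * N = 0) : P * N = 0 := by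
  ext i j
  have h0 : Q.mulVec (fun k => N k j) = 0 := by
    ext i'
    have := Matrix.ext_iff.mpr hQN i' j
    simpa [Matrix.mul_apply, Matrix.mulVec, dotProduct] using this
  have := congrFun (h _ h0) i
  simpa [Matrix.mulVec, dotProduct, Matrix.mul_apply] using this

open Matrix in
private lemma trace_compress' {n : Type*} [Fintype n] [DecidableEq n]
    (P a : Matrix n n ℂ) (hP : P * P = P) :
    (P * a * P).trace = a.trace - ((1 - P) * a * (1 - P)).trace := by
  have e1 : (1 - P) * a * (1 - P) = a - P * a - a * P + P * a * P := by noncomm_ring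
  have e2 : (P * a * P).trace = (P * a).trace := by
    rw [Matrix.trace_mul_comm (P * a) P, ← Matrix.mul_assoc, hP]
  rw [e1]
  simp only [Matrix.trace_add, Matrix.trace_sub, e2, Matrix.trace_mul_comm a P]
  ring

open Matrix MatrixOrder in
private lemma traceNorm_jordan' {n : Type*} [Fintype n] [DecidableEq n]
    {A Ap Am : Matrix n n ℂ}
    (hAp : Ap.PosSemidef) (hAm : Am.PosSemidef) (hJ : A = Ap - Am) (ho : Ap * Am = 0) :
    traceNorm A = (Ap.trace + Am.trace).re := by
  have hA : A.IsHermitian := by rw [hJ]; exact hAp.1.sub hAm.1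
  have ho' : Am * Ap = 0 := by
    have := congrArg conjTranspose ho
    rwa [conjTranspose_mul, hAp.1, hAm.1, conjTranspose_zero] at this
  have h1 : (Ap + Am) * (Ap + Am) = Ap * Ap + Am * Am + (Ap * Am + Am * Ap) := by
    noncomm_ring
  have h2 : (Ap - Am) * (Ap - Am) = Ap * Ap + Am * Am - (Ap * Am + Am * Ap) := by
    noncomm_ring
  have hsq : (Ap + Am) ^ 2 = Aᴴ * A := by
    rw [pow_two, hA.eq, hJ, h1, h2, ho, ho']
    simp
  have key : traceNorm A = (CFC.sqrt (Aᴴ * A)).trace.re := by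
    unfold traceNorm
    rw [CFC.sqrt_eq_real_sqrt (Aᴴ * A) (posSemidef_conjTranspose_mul_self A).nonneg,
      cfcₙ_eq_cfc (hf0 := Real.sqrt_zero), (posSemidef_conjTranspose_mul_self A).1.cfc_eq]
    simp [IsHermitian.cfc, Unitary.conjStarAlgAut_apply]
  rw [key, ← hsq, CFC.sqrt_sq (Ap + Am) (hAp.add hAm).nonneg, trace_add]

open Matrix MatrixOrder in
private lemma herm_compress_zero' {n : Type*} [Fintype n] [DecidableEq n]
    {a P : Matrix n n ℂ} (ha : a.PosSemidef) (hP : P.IsHermitian)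
    (h : P * a * P = 0) : P * a = 0 ∧ a * P = 0 := by
  have key : (CFC.sqrt a * P)ᴴ * (CFC.sqrt a * P) = P * a * P := by
    rw [conjTranspose_mul, (CFC.sqrt_nonneg a).posSemidef.1, hP.eq, Matrix.mul_assoc,
      ← Matrix.mul_assoc (CFC.sqrt a), CFC.sqrt_mul_sqrt_self a ha.nonneg, ← Matrix.mul_assoc]
  rw [h] at key
  have hz : CFC.sqrt a * P = 0 := Matrix.conjTranspose_mul_self_eq_zero.mp key
  have haP : a * P = 0 := by
    rw [← CFC.sqrt_mul_sqrt_self a ha.nonneg, Matrix.mul_assoc, hz, Matrix.mul_zero]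
  refine ⟨?_, haP⟩
  have := congrArg conjTranspose haP
  rwa [conjTranspose_mul, ha.1.eq, hP.eq, conjTranspose_zero] at this

open Matrix in
private lemma compress_zero_iff' {n : Type*} [Fintype n] [DecidableEq n]
    {P c : Matrix n n ℂ} (hc : c.PosSemidef) (hP : P.IsHermitian) (hPP : P * P = P) :
    (1 - P) * c * (1 - P) = 0 ↔ P * c * P = c := by
  constructor
  · intro h
    have hherm : (1 - P).IsHermitian := Matrix.isHermitian_one.sub hP
    obtain ⟨h1, h2⟩ := herm_compress_zero' hc hherm h
    have hPc : P * c = c := by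
      rw [Matrix.sub_mul, Matrix.one_mul, sub_eq_zero] at h1; exact h1.symm
    have hcP : c * P = c := by
      rw [Matrix.mul_sub, Matrix.mul_one, sub_eq_zero] at h2; exact h2.symm
    rw [Matrix.mul_assoc, hcP, hPc]
  · intro h
    have hPc : P * c = c := by
      calc P * c = P * (P * c * P) := by rw [h]
        _ = (P * P) * c * P := by noncomm_ring
        _ = P * c * P := by rw [hPP]
        _ = c := h
    rw [Matrix.sub_mul, Matrix.one_mul, hPc, sub_self, Matrix.zero_mul]

/-- let `Δ` be Hermitian with Jordan decomposition `Δ = Δ₊ − Δ₋`, let `λ`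
be a CPTP map, let `λ(Δ) = Q₊ − Q₋` be the Jordan decomposition of the image, and let
`Π₊, Π₋` be the orthogonal projectors onto the supports of `Q₊` and `Q₋`. Then
`‖λ(Δ)‖₁ = ‖Δ‖₁` iff `Π₊ λ(Δ₊) Π₊ = λ(Δ₊)`, `Π₋ λ(Δ₋) Π₋ = λ(Δ₋)`,
`Π₊ λ(Δ₋) Π₊ = 0` and `Π₋ λ(Δ₊) Π₋ = 0`. -/
theorem traceNorm_preserved_iff_support_conditions
    {m d : ℕ}
    (Δ Δp Δm : Matrix (Fin m) (Fin m) ℂ)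
    (hΔ : Δ.IsHermitian)
    (hΔp : Δp.PosSemidef) (hΔm : Δm.PosSemidef)
    (hJordan : Δ = Δp - Δm) (horth : Δp * Δm = 0)
    (lam : Matrix (Fin m) (Fin m) ℂ → Matrix (Fin d) (Fin d) ℂ)
    (hlin : IsLinearMap ℂ lam) (hcp : IsCompletelyPositive lam)
    (htp : IsTracePreservingMap lam)
    (Qp Qm : Matrix (Fin d) (Fin d) ℂ)
    (hQp : Qp.PosSemidef) (hQm : Qm.PosSemidef)
    (hQJordan : lam Δ = Qp - Qm) (hQorth : Qp * Qm = 0)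
    (Pp Pm : Matrix (Fin d) (Fin d) ℂ)
    (hPp : IsSupportProjection Pp Qp) (hPm : IsSupportProjection Pm Qm) :
    traceNorm (lam Δ) = traceNorm Δ ↔
      (Pp * lam Δp * Pp = lam Δp ∧ Pm * lam Δm * Pm = lam Δm ∧
       Pp * lam Δm * Pp = 0 ∧ Pm * lam Δp * Pm = 0) := by
  obtain ⟨hPp1, hPp2, hPp3, hPp4⟩ := hPp
  obtain ⟨hPm1, hPm2, hPm3, hPm4⟩ := hPm
  have ha : (lam Δp).PosSemidef := cp_pos' hcp hΔp
  have hb : (lam Δm).PosSemidef := cp_pos' hcp hΔm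
  have hQmQp : Qm * Qp = 0 := by
    have := congrArg Matrix.conjTranspose hQorth
    rwa [Matrix.conjTranspose_mul, hQp.1.eq, hQm.1.eq, Matrix.conjTranspose_zero] at this
  have hPpQm : Pp * Qm = 0 := supp_kill' hPp4 hQorth
  have hPmQp : Pm * Qp = 0 := supp_kill' hPm4 hQmQp
  have hQpPp : Qp * Pp = Qp := by
    have := congrArg Matrix.conjTranspose hPp3
    rwa [Matrix.conjTranspose_mul, hQp.1.eq, hPp1.eq] at this
  have hQmPm : Qm * Pm = Qm := by
    have := congrArg Matrix.conjTranspose hPm3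
    rwa [Matrix.conjTranspose_mul, hQm.1.eq, hPm1.eq] at this
  have hlamΔ : lam Δ = lam Δp - lam Δm := by rw [hJordan, hlin.map_sub]
  have hQp_eq : Qp = Pp * lam Δp * Pp - Pp * lam Δm * Pp := by
    have h1 : Pp * lam Δ * Pp = Qp := by
      rw [hQJordan, Matrix.mul_sub, hPp3, hPpQm, sub_zero, hQpPp]
    rw [← h1, hlamΔ, Matrix.mul_sub, Matrix.sub_mul]
  have hQm_eq : Qm = Pm * lam Δm * Pm - Pm * lam Δp * Pm := by
    have h1 : Pm * lam Δ * Pm = -Qm := by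
      rw [hQJordan, Matrix.mul_sub, hPm3, hPmQp, zero_sub, Matrix.neg_mul, hQmPm]
    have h2 := congrArg Neg.neg h1
    rw [neg_neg] at h2
    rw [← h2, hlamΔ, Matrix.mul_sub, Matrix.sub_mul, neg_sub]
  have hPp1' : (1 - Pp).IsHermitian := Matrix.isHermitian_one.sub hPp1
  have hPm1' : (1 - Pm).IsHermitian := Matrix.isHermitian_one.sub hPm1
  have hB1 : ((1 - Pp) * lam Δp * (1 - Pp)).PosSemidef := by
    have := ha.conjTranspose_mul_mul_same (1 - Pp)
    rwa [hPp1'.eq] at this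
  have hB2 : (Pp * lam Δm * Pp).PosSemidef := by
    have := hb.conjTranspose_mul_mul_same Pp
    rwa [hPp1.eq] at this
  have hB3 : ((1 - Pm) * lam Δm * (1 - Pm)).PosSemidef := by
    have := hb.conjTranspose_mul_mul_same (1 - Pm)
    rwa [hPm1'.eq] at this
  have hB4 : (Pm * lam Δp * Pm).PosSemidef := by
    have := ha.conjTranspose_mul_mul_same Pm
    rwa [hPm1.eq] at this
  set T1 := ((1 - Pp) * lam Δp * (1 - Pp)).trace with hT1
  set T2 := (Pp * lam Δm * Pp).trace with hT2
  set T3 := ((1 - Pm) * lam Δm * (1 - Pm)).trace with hT3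
  set T4 := (Pm * lam Δp * Pm).trace with hT4
  have htrace : Qp.trace + Qm.trace = Δp.trace + Δm.trace - (T1 + T2 + T3 + T4) := by
    have e1 : (Pp * lam Δp * Pp).trace = (lam Δp).trace - T1 := trace_compress' Pp _ hPp2
    have e3 : (Pm * lam Δm * Pm).trace = (lam Δm).trace - T3 := trace_compress' Pm _ hPm2
    rw [hQp_eq, hQm_eq, Matrix.trace_sub, Matrix.trace_sub, e1, e3, htp Δp, htp Δm,
      ← hT2, ← hT4]
    ring
  have hTd : traceNorm Δ = (Δp.trace + Δm.trace).re :=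
    traceNorm_jordan' hΔp hΔm hJordan horth
  have hTl : traceNorm (lam Δ) = (Qp.trace + Qm.trace).re :=
    traceNorm_jordan' hQp hQm hQJordan hQorth
  obtain ⟨h1re, h1im⟩ := Complex.nonneg_iff.mp (show (0:ℂ) ≤ T1 from psd_trace_nonneg' hB1)
  obtain ⟨h2re, h2im⟩ := Complex.nonneg_iff.mp (show (0:ℂ) ≤ T2 from psd_trace_nonneg' hB2)
  obtain ⟨h3re, h3im⟩ := Complex.nonneg_iff.mp (show (0:ℂ) ≤ T3 from psd_trace_nonneg' hB3)
  obtain ⟨h4re, h4im⟩ := Complex.nonneg_iff.mp (show (0:ℂ) ≤ T4 from psd_trace_nonneg' hB4)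
  have hsum : traceNorm (lam Δ) = traceNorm Δ ↔ T1 = 0 ∧ T2 = 0 ∧ T3 = 0 ∧ T4 = 0 := by
    rw [hTd, hTl, htrace]
    constructor
    · intro h
      have hre : T1.re + T2.re + T3.re + T4.re = 0 := by
        have := h
        simp only [Complex.sub_re, Complex.add_re] at this
        linarith
      refine ⟨?_, ?_, ?_, ?_⟩ <;>
        exact Complex.ext (by simp only [Complex.zero_re]; linarith) (by simp [← h1im, ← h2im, ← h3im, ← h4im])
    · rintro ⟨e1, e2, e3, e4⟩
      rw [e1, e2, e3, e4]
      ring_nf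
  rw [hsum, psd_trace_eq_zero_iff' hB1, psd_trace_eq_zero_iff' hB2,
    psd_trace_eq_zero_iff' hB3, psd_trace_eq_zero_iff' hB4,
    compress_zero_iff' ha hPp1 hPp2, compress_zero_iff' hb hPm1 hPm2]
  tauto
end
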